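/- Let F be a 3-colored complete graph on exactly 4 vertices in which every set of three vertices spans a rainbow triangle (i.e., no triangle avoids any of the three colors). Then each of the three colors appears on exactly two edges of F forming a perfect matching; in particular, F is isomorphic (as a colored graph, up to permuting the colors) to F_4. -/
import Mathlib


/-- A `k`-colored complete graph on vertex set `Fin n`: a symmetric assignment of a
color in `Fin k` to each pair of vertices (the diagonal values are irrelevant). -/
def IsColoring {n k : ℕ} (G : Fin n → Fin n → Fin k) : Prop :=
  ∀ u v : Fin n, G u v = G v u

/-- `φ` is a copy of the `k`-colored complete graph `F` in `G`: an injection of the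
vertices preserving all edge colors. -/
def IsCopy {m n k : ℕ} (F : Fin m → Fin m → Fin k) (G : Fin n → Fin n → Fin k)
    (φ : Fin m → Fin n) : Prop :=
  Function.Injective φ ∧ ∀ u v : Fin m, u ≠ v → G (φ u) (φ v) = F u v

/-- The number of copies of `F` in `G`. -/
noncomputable def copyCount {m n k : ℕ} (F : Fin m → Fin m → Fin k)
    (G : Fin n → Fin n → Fin k) : ℕ :=
  Nat.card {φ : Fin m → Fin n // IsCopy F G φ}

/-- A family of pairwise pair-disjoint copies: any two distinct members share at most
one vertex. -/
def PairDisjointFamily {m n : ℕ} (Φ : Finset (Fin m → Fin n)) : Prop :=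
  ∀ φ ∈ Φ, ∀ ψ ∈ Φ, φ ≠ ψ → (Set.range φ ∩ Set.range ψ).ncard ≤ 1

/-- `G` contains a collection of at least `t` pairwise pair-disjoint copies of `F`. -/
def HasDisjointCopies {m n k : ℕ} (F : Fin m → Fin m → Fin k)
    (G : Fin n → Fin n → Fin k) (t : ℝ) : Prop :=
  ∃ Φ : Finset (Fin m → Fin n), t ≤ (Φ.card : ℝ) ∧
    (∀ φ ∈ Φ, IsCopy F G φ) ∧ PairDisjointFamily Φ

/-- The number of (unordered) edges whose colors differ between `G` and `G'`. -/
noncomputable def changedEdges {n k : ℕ} (G G' : Fin n → Fin n → Fin k) : ℕ :=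
  Nat.card {p : Fin n × Fin n // p.1 < p.2 ∧ G p.1 p.2 ≠ G' p.1 p.2}

/-- The 3-colored complete graph `F₄` on four vertices in which each color class is a
perfect matching: `{0,1},{2,3}` have color `0`; `{0,3},{1,2}` have color `1`;
`{0,2},{1,3}` have color `2`. -/
def F4 : Fin 4 → Fin 4 → Fin 3 := fun i j =>
  if (i = 0 ∧ j = 1) ∨ (i = 1 ∧ j = 0) ∨ (i = 2 ∧ j = 3) ∨ (i = 3 ∧ j = 2) then 0
  else if (i = 0 ∧ j = 3) ∨ (i = 3 ∧ j = 0) ∨ (i = 1 ∧ j = 2) ∨ (i = 2 ∧ j = 1) then 1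
  else 2


def tbl (a b c d e f : Fin 3) : Fin 4 → Fin 4 → Fin 3 :=
  !![0, a, b, c; a, 0, d, e; b, d, 0, f; c, e, f, 0]

set_option maxHeartbeats 4000000 in
set_option synthInstance.maxHeartbeats 4000000 in
set_option synthInstance.maxSize 2000 in
lemma tbl_key : ∀ a b c d e f : Fin 3,
    (∀ u v w : Fin 4, u ≠ v → u ≠ w → v ≠ w →
      tbl a b c d e f u v ≠ tbl a b c d e f u w ∧
      tbl a b c d e f u v ≠ tbl a b c d e f v w ∧
      tbl a b c d e f u w ≠ tbl a b c d e f v w) →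
    ((∀ u v x y : Fin 4, u ≠ v → u ≠ x → u ≠ y → v ≠ x → v ≠ y → x ≠ y →
        tbl a b c d e f u v = tbl a b c d e f x y) ∧
      (∀ c' : Fin 3, ∃ u v : Fin 4, u ≠ v ∧ tbl a b c d e f u v = c')) ∧
    ∃ e' : Fin 4 ≃ Fin 4, ∃ σ : Fin 3 ≃ Fin 3,
      ∀ u v : Fin 4, u ≠ v → tbl a b c d e f (e' u) (e' v) = σ (F4 u v) := by
  decide

/-- If `F` is a 3-colored complete graph on 4 vertices in which every
three vertices span a rainbow triangle, then opposite edges of `F` get the same color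
and every color appears (i.e. each color appears on exactly two edges forming a
perfect matching); in particular `F` is isomorphic to `F₄` up to permuting the
colors. -/
theorem all_triangles_rainbow_iff_F4 (F : Fin 4 → Fin 4 → Fin 3) (hF : IsColoring F)
    (hrb : ∀ u v w : Fin 4, u ≠ v → u ≠ w → v ≠ w →
      F u v ≠ F u w ∧ F u v ≠ F v w ∧ F u w ≠ F v w) :
    ((∀ u v x y : Fin 4, u ≠ v → u ≠ x → u ≠ y → v ≠ x → v ≠ y → x ≠ y →
        F u v = F x y) ∧
      (∀ c : Fin 3, ∃ u v : Fin 4, u ≠ v ∧ F u v = c)) ∧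
    ∃ e : Fin 4 ≃ Fin 4, ∃ σ : Fin 3 ≃ Fin 3,
      ∀ u v : Fin 4, u ≠ v → F (e u) (e v) = σ (F4 u v) := by
  have hq : ∀ u v : Fin 4, u ≠ v →
      F u v = tbl (F 0 1) (F 0 2) (F 0 3) (F 1 2) (F 1 3) (F 2 3) u v := by
    intro u v h
    fin_cases u <;> fin_cases v <;>
      first
        | exact absurd rfl h
        | rfl
        | (rw [hF]; rfl)
  have hrb' : ∀ u v w : Fin 4, u ≠ v → u ≠ w → v ≠ w →
      tbl (F 0 1) (F 0 2) (F 0 3) (F 1 2) (F 1 3) (F 2 3) u v ≠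
        tbl (F 0 1) (F 0 2) (F 0 3) (F 1 2) (F 1 3) (F 2 3) u w ∧
      tbl (F 0 1) (F 0 2) (F 0 3) (F 1 2) (F 1 3) (F 2 3) u v ≠
        tbl (F 0 1) (F 0 2) (F 0 3) (F 1 2) (F 1 3) (F 2 3) v w ∧
      tbl (F 0 1) (F 0 2) (F 0 3) (F 1 2) (F 1 3) (F 2 3) u w ≠
        tbl (F 0 1) (F 0 2) (F 0 3) (F 1 2) (F 1 3) (F 2 3) v w := by
    intro u v w h1 h2 h3
    rw [← hq u v h1, ← hq u w h2, ← hq v w h3]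
    exact hrb u v w h1 h2 h3
  obtain ⟨⟨h1, h2⟩, e', σ, h3⟩ :=
    tbl_key (F 0 1) (F 0 2) (F 0 3) (F 1 2) (F 1 3) (F 2 3) hrb'
  refine ⟨⟨fun u v x y a b c d g i => ?_, fun c => ?_⟩, e', σ, fun u v h => ?_⟩
  · rw [hq u v a, hq x y i]; exact h1 u v x y a b c d g i
  · obtain ⟨u, v, huv, hc⟩ := h2 c
    exact ⟨u, v, huv, by rw [hq u v huv]; exact hc⟩
  · rw [hq _ _ (fun he => h (e'.injective he))]; exact h3 u v h
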